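/- Let f : I → I be continuous with zero topological entropy and let x ∈ I be such that the ω-limit set ω_f(x) is infinite (hence solenoidal with periods p_t = 2^t, contained in Q = ∩_t Q_t where Q_t is a disjoint union of 2^t periodic closed intervals K_a, a ∈ {0,1}^t). Then limsup_{ε→0} C̄_∞(x, ε) = 0; in particular, for every t and every ε ≤ min{dist(K_a, K_b) : a ≠ b in {0,1}^t}, C̄_∞(x, ε) ≤ 2^{−t}. -/

import Mathlib

open Filter Metric Set
open scoped Classical

namespace RQA

variable {X : Type*} [MetricSpace X]

/-- Correlation sum `C_m(x,n,ε)` with respect to the Bowen metric `ρ_m`: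
`ρ_m(f^[i] x, f^[j] x) ≤ ε ↔ ∀ k < m, dist (f^[i+k] x) (f^[j+k] x) ≤ ε`. -/
noncomputable def corrSum (f : X → X) (x : X) (m n : ℕ) (ε : ℝ) : ℝ :=
  (((Finset.range n ×ˢ Finset.range n).filter
      (fun p => ∀ k < m, dist (f^[p.1 + k] x) (f^[p.2 + k] x) ≤ ε)).card : ℝ) / (n : ℝ) ^ 2

/-- Correlation sum `C_∞(x,n,ε)` with respect to the metric `ρ_∞`. -/
noncomputable def corrSumInf (f : X → X) (x : X) (n : ℕ) (ε : ℝ) : ℝ :=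
  (((Finset.range n ×ˢ Finset.range n).filter
      (fun p => ∀ k : ℕ, dist (f^[p.1 + k] x) (f^[p.2 + k] x) ≤ ε)).card : ℝ) / (n : ℝ) ^ 2

/-- Lower asymptotic correlation sum `C̲_m(x,ε)`. -/
noncomputable def lowerCorr (f : X → X) (x : X) (m : ℕ) (ε : ℝ) : ℝ :=
  liminf (fun n => corrSum f x m n ε) atTop

/-- Upper asymptotic correlation sum `C̄_m(x,ε)`. -/
noncomputable def upperCorr (f : X → X) (x : X) (m : ℕ) (ε : ℝ) : ℝ :=
  limsup (fun n => corrSum f x m n ε) atTop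

/-- Recurrence `m`-determinism `DET_m(x,n,ε) = C_m(x,n,ε)/C_1(x,n,ε)`. -/
noncomputable def detSum (f : X → X) (x : X) (m n : ℕ) (ε : ℝ) : ℝ :=
  corrSum f x m n ε / corrSum f x 1 n ε

/-- Recurrence `∞`-determinism `DET_∞(x,n,ε) = C_∞(x,n,ε)/C_1(x,n,ε)`. -/
noncomputable def detSumInf (f : X → X) (x : X) (n : ℕ) (ε : ℝ) : ℝ :=
  corrSumInf f x n ε / corrSum f x 1 n ε

/-- Lower asymptotic recurrence determinism `DET̲_m(x,ε)`. -/
noncomputable def lowerDet (f : X → X) (x : X) (m : ℕ) (ε : ℝ) : ℝ :=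
  liminf (fun n => detSum f x m n ε) atTop

/-- Upper asymptotic recurrence determinism `DET̄_m(x,ε)`. -/
noncomputable def upperDet (f : X → X) (x : X) (m : ℕ) (ε : ℝ) : ℝ :=
  limsup (fun n => detSum f x m n ε) atTop

/-- `C̄_∞(x,ε) = lim_m C̄_m(x,ε)`; since `m ↦ C̄_m(x,ε)` is non-increasing,
the limit equals the infimum over `m ≥ 1`. -/
noncomputable def upperCorrInf (f : X → X) (x : X) (ε : ℝ) : ℝ :=
  ⨅ m : ℕ, upperCorr f x (m + 1) ε

/-- `C̲_∞(x,ε) = lim_m C̲_m(x,ε)` (a limit of a non-increasing sequence). -/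
noncomputable def lowerCorrInf (f : X → X) (x : X) (ε : ℝ) : ℝ :=
  ⨅ m : ℕ, lowerCorr f x (m + 1) ε

/-- `DET̄_∞(x,ε) = lim_m DET̄_m(x,ε)` (a limit of a non-increasing sequence). -/
noncomputable def upperDetInf (f : X → X) (x : X) (ε : ℝ) : ℝ :=
  ⨅ m : ℕ, upperDet f x (m + 1) ε

/-- `DET̲_∞(x,ε) = lim_m DET̲_m(x,ε)` (a limit of a non-increasing sequence). -/
noncomputable def lowerDetInf (f : X → X) (x : X) (ε : ℝ) : ℝ :=
  ⨅ m : ℕ, lowerDet f x (m + 1) ε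

/-- The ω-limit set of `x`: the set of limit points of the trajectory `(f^[n] x)`. -/
def omegaSet (f : X → X) (x : X) : Set X :=
  {y | ∃ φ : ℕ → ℕ, StrictMono φ ∧ Tendsto (fun n => f^[φ n] x) atTop (nhds y)}

/-- Distance between two subsets of `ℝ`. -/
noncomputable def setDist (A B : Set ℝ) : ℝ :=
  sInf {d | ∃ a ∈ A, ∃ b ∈ B, d = dist a b}

/-- The binary word of length `t` given by the binary digits of `n`
(the 2-adic encoding, least significant digit first; addition of integers to
words is addition with carry from left to right, i.e. ordinary addition of the
encoded values modulo `2^t`). -/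
def word (t n : ℕ) : Fin t → Bool := fun i => n.testBit i.val

/-- The value `∑ w_i 2^i` of a binary word under the 2-adic encoding. -/
def encodeWord {t : ℕ} (w : Fin t → Bool) : ℕ :=
  ∑ i : Fin t, if w i then 2 ^ i.val else 0

end RQA

open RQA

namespace RQA

/-! ### Auxiliary lemmas for `stmt_11` -/

lemma setDist_le' {A B : Set ℝ} {p q : ℝ} (hp : p ∈ A) (hq : q ∈ B) :
    setDist A B ≤ dist p q := by
  apply csInf_le
  · exact ⟨0, fun d ⟨a, _, b, _, hd⟩ => hd ▸ dist_nonneg⟩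
  · exact ⟨p, hp, q, hq, rfl⟩

lemma le_setDist' {A B : Set ℝ} (hA : A.Nonempty) (hB : B.Nonempty) {c : ℝ}
    (h : ∀ p ∈ A, ∀ q ∈ B, c ≤ dist p q) : c ≤ setDist A B := by
  apply le_csInf
  · obtain ⟨a, ha⟩ := hA; obtain ⟨b, hb⟩ := hB; exact ⟨dist a b, a, ha, b, hb, rfl⟩
  · rintro d ⟨a, ha, b, hb, rfl⟩; exact h a ha b hb

lemma setDist_comm' (A B : Set ℝ) : setDist A B = setDist B A := by
  unfold setDist
  congr 1
  ext d
  constructor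
  · rintro ⟨a, ha, b, hb, rfl⟩; exact ⟨b, hb, a, ha, dist_comm a b⟩
  · rintro ⟨a, ha, b, hb, rfl⟩; exact ⟨b, hb, a, ha, dist_comm a b⟩

lemma setDist_Icc' {y z y' z' : ℝ} (h1 : y ≤ z) (h2 : y' ≤ z') (h : z ≤ y') :
    setDist (Icc y z) (Icc y' z') = y' - z := by
  apply le_antisymm
  · have hz : z ∈ Icc y z := ⟨h1, le_refl z⟩
    have hy' : y' ∈ Icc y' z' := ⟨le_refl y', h2⟩
    have := setDist_le' hz hy'
    rw [Real.dist_eq, abs_sub_comm, abs_of_nonneg (sub_nonneg.2 h)] at this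
    exact this
  · apply le_setDist' (Set.nonempty_Icc.2 h1) (Set.nonempty_Icc.2 h2)
    rintro p ⟨_, hp⟩ q ⟨hq, _⟩
    have hpq : y' - z ≤ q - p := by linarith
    calc y' - z ≤ q - p := hpq
    _ ≤ |q - p| := le_abs_self _
    _ = dist p q := by rw [Real.dist_eq, abs_sub_comm]

lemma Icc_disjoint_cases {y z y' z' : ℝ} (h1 : y ≤ z) (h2 : y' ≤ z')
    (hd : Disjoint (Icc y z) (Icc y' z')) : z < y' ∨ z' < y := by
  by_contra hcon
  push_neg at hcon
  obtain ⟨hc1, hc2⟩ := hcon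
  have hm1 : max y y' ∈ Icc y z := ⟨le_max_left _ _, max_le h1 hc1⟩
  have hm2 : max y y' ∈ Icc y' z' := ⟨le_max_right _ _, max_le hc2 h2⟩
  exact Set.disjoint_left.1 hd hm1 hm2

lemma setDist_pos_of_disjoint {y z y' z' : ℝ} (h1 : y ≤ z) (h2 : y' ≤ z')
    (hd : Disjoint (Icc y z) (Icc y' z')) : 0 < setDist (Icc y z) (Icc y' z') := by
  rcases Icc_disjoint_cases h1 h2 hd with h | h
  · rw [setDist_Icc' h1 h2 h.le]; linarith
  · rw [setDist_comm', setDist_Icc' h2 h1 h.le]; linarith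

lemma word_eq_iff {t m n : ℕ} : word t m = word t n ↔ m % 2 ^ t = n % 2 ^ t := by
  constructor
  · intro h
    apply Nat.eq_of_testBit_eq
    intro i
    rcases lt_or_ge i t with hi | hi
    · have := congrFun h ⟨i, hi⟩
      simp only [word] at this
      simp [Nat.testBit_mod_two_pow, hi, this]
    · have h1 : m % 2 ^ t < 2 ^ i := lt_of_lt_of_le
        (Nat.mod_lt _ (by positivity : 0 < 2 ^ t)) (Nat.pow_le_pow_right two_pos hi)
      have h2 : n % 2 ^ t < 2 ^ i := lt_of_lt_of_le
        (Nat.mod_lt _ (by positivity : 0 < 2 ^ t)) (Nat.pow_le_pow_right two_pos hi)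
      rw [Nat.testBit_lt_two_pow h1, Nat.testBit_lt_two_pow h2]
  · intro h
    funext i
    have : (m % 2 ^ t).testBit i.val = (n % 2 ^ t).testBit i.val := by rw [h]
    simpa [word, Nat.testBit_mod_two_pow, i.isLt] using this

lemma word_surj (t : ℕ) (a : Fin t → Bool) : ∃ n, word t n = a := by
  have hinj : Function.Injective (fun n : Fin (2 ^ t) => word t n.val) := by
    intro m n h
    have := word_eq_iff.1 h
    exact Fin.ext (by rwa [Nat.mod_eq_of_lt m.isLt, Nat.mod_eq_of_lt n.isLt] at this)
  have hcard : Fintype.card (Fin (2 ^ t)) = Fintype.card (Fin t → Bool) := by simp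
  have hsurj := ((Fintype.bijective_iff_injective_and_card _).2 ⟨hinj, hcard⟩).2
  obtain ⟨n, hn⟩ := hsurj a
  exact ⟨n.val, hn⟩

lemma card_resid (n q i : ℕ) :
    ((Finset.range n).filter (fun j => j % q = i % q)).card ≤ n / q + 1 := by
  have hci : ((Finset.range n).filter (fun j => j % q = i % q)).card
      = (((Finset.range n).filter (fun j => j % q = i % q)).image (fun j => j / q)).card := by
    rw [Finset.card_image_of_injOn]
    intro a ha b hb hab
    rw [Finset.mem_coe, Finset.mem_filter] at ha hb
    have hab2 : a / q = b / q := hab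
    have h1 : a % q = i % q := ha.2
    have h2 : b % q = i % q := hb.2
    have e1 : a = q * (a / q) + a % q := (Nat.div_add_mod a q).symm
    have e2 : b = q * (b / q) + b % q := (Nat.div_add_mod b q).symm
    rw [e1, e2, hab2, h1, h2]
  rw [hci]
  have hsub : (((Finset.range n).filter (fun j => j % q = i % q)).image (fun j => j / q))
      ⊆ Finset.range (n / q + 1) := by
    intro c hc
    simp only [Finset.mem_image, Finset.mem_filter, Finset.mem_range] at hc ⊢
    obtain ⟨j, ⟨hj, _⟩, rfl⟩ := hc
    have hjq : j / q ≤ n / q := Nat.div_le_div_right (le_of_lt hj)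
    omega
  calc _ ≤ (Finset.range (n / q + 1)).card := Finset.card_le_card hsub
  _ = n / q + 1 := by simp

lemma card_pairs (n N q : ℕ) (P : ℕ × ℕ → Prop) [DecidablePred P]
    (hP : ∀ p : ℕ × ℕ, N ≤ p.1 → N ≤ p.2 → P p → p.1 % q = p.2 % q) :
    (((Finset.range n) ×ˢ (Finset.range n)).filter P).card ≤ 2 * N * n + n * (n / q + 1) := by
  classical
  set S := ((Finset.range n) ×ˢ (Finset.range n)).filter P with hSdef
  have hsub : S ⊆ ((Finset.range N ×ˢ Finset.range n) ∪ (Finset.range n ×ˢ Finset.range N))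
      ∪ ((Finset.range n) ×ˢ (Finset.range n)).filter (fun p => p.1 % q = p.2 % q) := by
    intro p hp
    simp only [hSdef, Finset.mem_filter, Finset.mem_product, Finset.mem_range] at hp
    obtain ⟨⟨h1, h2⟩, hPp⟩ := hp
    rcases lt_or_ge p.1 N with h | h
    · simp [Finset.mem_union, Finset.mem_product, Finset.mem_range, h, h1, h2]
    rcases lt_or_ge p.2 N with h' | h'
    · simp [Finset.mem_union, Finset.mem_product, Finset.mem_range, h', h1, h2]
    · have := hP p h h' hPp
      simp [Finset.mem_union, Finset.mem_filter, Finset.mem_product, Finset.mem_range,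
        h1, h2, this]
  calc S.card ≤ _ := Finset.card_le_card hsub
  _ ≤ ((Finset.range N ×ˢ Finset.range n) ∪ (Finset.range n ×ˢ Finset.range N)).card
      + (((Finset.range n) ×ˢ (Finset.range n)).filter (fun p => p.1 % q = p.2 % q)).card :=
    Finset.card_union_le _ _
  _ ≤ (N * n + n * N) + n * (n / q + 1) := by
    gcongr
    · calc _ ≤ (Finset.range N ×ˢ Finset.range n).card
          + (Finset.range n ×ˢ Finset.range N).card := Finset.card_union_le _ _
      _ = N * n + n * N := by simp [Finset.card_product]
    · have hcov : (((Finset.range n) ×ˢ (Finset.range n)).filter (fun p => p.1 % q = p.2 % q))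
          ⊆ (Finset.range n).biUnion (fun i =>
            ((Finset.range n).filter (fun j => j % q = i % q)).image (fun j => (i, j))) := by
        intro p hp
        simp only [Finset.mem_filter, Finset.mem_product, Finset.mem_range] at hp
        simp only [Finset.mem_biUnion, Finset.mem_image, Finset.mem_filter, Finset.mem_range]
        exact ⟨p.1, hp.1.1, p.2, ⟨hp.1.2, hp.2.symm⟩, rfl⟩
      calc _ ≤ _ := Finset.card_le_card hcov
      _ ≤ ∑ i ∈ Finset.range n,
          (((Finset.range n).filter (fun j => j % q = i % q)).image (fun j => (i, j))).card :=
        Finset.card_biUnion_le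
      _ ≤ ∑ i ∈ Finset.range n, (n / q + 1) := by
        apply Finset.sum_le_sum
        intro i _
        calc _ ≤ ((Finset.range n).filter (fun j => j % q = i % q)).card :=
          Finset.card_image_le
        _ ≤ n / q + 1 := card_resid n q i
      _ = n * (n / q + 1) := by simp [mul_comm]
  _ = 2 * N * n + n * (n / q + 1) := by ring

lemma exists_shift (q i j : ℕ) (hq : 0 < q) : ∃ d, d < q ∧ (i + d) % q = j % q := by
  refine ⟨(q - i % q + j) % q, Nat.mod_lt _ hq, ?_⟩
  rw [Nat.add_mod_mod]
  have h1 : q * (i / q) + i % q = i := Nat.div_add_mod i q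
  have h2 : i % q < q := Nat.mod_lt i hq
  have e : i + (q - i % q + j) = j + q * (i / q + 1) := by
    have e2 : q * (i / q + 1) = q * (i / q) + q := by ring
    omega
  rw [e, Nat.add_mul_mod_self_left]

lemma limsup_le_of_le_tendsto {u g : ℕ → ℝ} (h0 : ∀ n, 0 ≤ u n)
    (hle : ∀ᶠ n in Filter.atTop, u n ≤ g n) {c : ℝ}
    (hg : Filter.Tendsto g Filter.atTop (nhds c)) :
    Filter.limsup u Filter.atTop ≤ c := by
  have := Filter.limsup_le_limsup hle
    (isCoboundedUnder_le_of_eventually_le Filter.atTop (x := 0) (Filter.Eventually.of_forall h0))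
    hg.isBoundedUnder_le
  rwa [hg.limsup_eq] at this

lemma corrSum_nonneg (f : ℝ → ℝ) (x : ℝ) (m n : ℕ) (ε : ℝ) : 0 ≤ corrSum f x m n ε :=
  div_nonneg (Nat.cast_nonneg _) (by positivity)

lemma corrSum_le_one (f : ℝ → ℝ) (x : ℝ) (m n : ℕ) (ε : ℝ) : corrSum f x m n ε ≤ 1 := by
  unfold corrSum
  rcases Nat.eq_zero_or_pos n with h | h
  · simp [h]
  · rw [div_le_one (by positivity)]
    have hcard : ((Finset.range n ×ˢ Finset.range n).filter
        (fun p => ∀ k < m, dist (f^[p.1 + k] x) (f^[p.2 + k] x) ≤ ε)).card ≤ n * n := by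
      calc _ ≤ (Finset.range n ×ˢ Finset.range n).card := Finset.card_filter_le _ _
      _ = n * n := by simp
    calc ((((Finset.range n ×ˢ Finset.range n).filter
        (fun p => ∀ k < m, dist (f^[p.1 + k] x) (f^[p.2 + k] x) ≤ ε)).card : ℕ) : ℝ)
        ≤ ((n * n : ℕ) : ℝ) := Nat.cast_le.2 hcard
    _ = (n : ℝ) ^ 2 := by push_cast; ring

lemma upperCorr_nonneg (f : ℝ → ℝ) (x : ℝ) (m : ℕ) (ε : ℝ) : 0 ≤ upperCorr f x m ε :=
  Filter.le_limsup_of_frequently_le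
    (Filter.Eventually.frequently (Filter.Eventually.of_forall (fun n => corrSum_nonneg f x m n ε)))
    (Filter.isBoundedUnder_of ⟨1, fun n => corrSum_le_one f x m n ε⟩)

lemma upperCorr_le_one (f : ℝ → ℝ) (x : ℝ) (m : ℕ) (ε : ℝ) : upperCorr f x m ε ≤ 1 :=
  Filter.limsup_le_of_le
    (isCoboundedUnder_le_of_eventually_le Filter.atTop (x := 0)
      (Filter.Eventually.of_forall (fun n => corrSum_nonneg f x m n ε)))
    (Filter.Eventually.of_forall (fun n => corrSum_le_one f x m n ε))

end RQA

namespace RQA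

lemma gap_lemma (K : ∀ t : ℕ, (Fin t → Bool) → Set ℝ)
    (hK : ∀ t (a : Fin t → Bool), ∃ y z : ℝ, y < z ∧ 0 ≤ y ∧ z ≤ 1 ∧ K t a = Icc y z)
    (hnest : ∀ (s t : ℕ) (hst : s ≤ t) (b : Fin t → Bool),
      K t b ⊆ K s (fun i => b (Fin.castLE hst i)))
    (hdisj : ∀ t (a b : Fin t → Bool), a ≠ b → Disjoint (K t a) (K t b))
    {t : ℕ} {ε : ℝ}
    (hε : ∀ a b : Fin t → Bool, a ≠ b → ε ≤ setDist (K t a) (K t b))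
    {d : ℕ} (hd : d % 2 ^ t ≠ 0) :
    ε < max (setDist (K (t+1) (word (t+1) 0)) (K (t+1) (word (t+1) d)))
        (setDist (K (t+1) (word (t+1) (2 ^ t))) (K (t+1) (word (t+1) (2 ^ t + d)))) := by
  by_contra hcon
  push_neg at hcon
  rw [max_le_iff] at hcon
  obtain ⟨hc1, hc2⟩ := hcon
  -- restriction of level (t+1) words to level t
  have hres : ∀ n : ℕ, K (t+1) (word (t+1) n) ⊆ K t (word t n) := fun n =>
    hnest t (t+1) (Nat.le_succ t) (word (t+1) n)
  -- word identities
  have hW0d : word t 0 ≠ word t d := by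
    rw [Ne, word_eq_iff, Nat.zero_mod]
    exact fun h => hd h.symm
  have hW20 : word t (2 ^ t) = word t 0 := word_eq_iff.2 (by simp)
  have hW2d : word t (2 ^ t + d) = word t d := word_eq_iff.2 (Nat.add_mod_left _ _)
  have hW13 : word (t+1) 0 ≠ word (t+1) (2 ^ t) := by
    rw [Ne, word_eq_iff, Nat.zero_mod]
    have h2t : (2:ℕ) ^ t < 2 ^ (t+1) := Nat.pow_lt_pow_right one_lt_two (Nat.lt_succ_self t)
    rw [Nat.mod_eq_of_lt h2t]
    exact fun h => (by positivity : (0:ℕ) < 2 ^ t).ne' h.symm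
  -- interval data
  obtain ⟨y, z, hyz, _, _, hKt0⟩ := hK t (word t 0)
  obtain ⟨y', z', hyz', _, _, hKtd⟩ := hK t (word t d)
  obtain ⟨u1, v1, h1, _, _, hA1⟩ := hK (t+1) (word (t+1) 0)
  obtain ⟨u2, v2, h2, _, _, hA2⟩ := hK (t+1) (word (t+1) d)
  obtain ⟨u3, v3, h3, _, _, hA3⟩ := hK (t+1) (word (t+1) (2 ^ t))
  obtain ⟨u4, v4, h4, _, _, hA4⟩ := hK (t+1) (word (t+1) (2 ^ t + d))
  have hS1 : Icc u1 v1 ⊆ Icc y z := by rw [← hA1, ← hKt0]; exact hres 0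
  have hS2 : Icc u2 v2 ⊆ Icc y' z' := by rw [← hA2, ← hKtd]; exact hres d
  have hS3 : Icc u3 v3 ⊆ Icc y z := by rw [← hA3, ← hKt0, ← hW20]; exact hres (2 ^ t)
  have hS4 : Icc u4 v4 ⊆ Icc y' z' := by rw [← hA4, ← hKtd, ← hW2d]; exact hres (2 ^ t + d)
  obtain ⟨hy1, hv1⟩ := (Set.Icc_subset_Icc_iff h1.le).1 hS1
  obtain ⟨hy2, hv2⟩ := (Set.Icc_subset_Icc_iff h2.le).1 hS2
  obtain ⟨hy3, hv3⟩ := (Set.Icc_subset_Icc_iff h3.le).1 hS3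
  obtain ⟨hy4, hv4⟩ := (Set.Icc_subset_Icc_iff h4.le).1 hS4
  have hDt : Disjoint (Icc y z) (Icc y' z') := by
    rw [← hKt0, ← hKtd]; exact hdisj t _ _ hW0d
  have hD13 : Disjoint (Icc u1 v1) (Icc u3 v3) := by
    rw [← hA1, ← hA3]; exact hdisj (t+1) _ _ hW13
  have hgapt : ε ≤ setDist (Icc y z) (Icc y' z') := by
    rw [← hKt0, ← hKtd]; exact hε _ _ hW0d
  rw [hA1, hA2] at hc1
  rw [hA3, hA4] at hc2
  rcases Icc_disjoint_cases hyz.le hyz'.le hDt with hord | hord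
  · -- z < y'
    have hsd : setDist (Icc y z) (Icc y' z') = y' - z := setDist_Icc' hyz.le hyz'.le hord.le
    have e12 : setDist (Icc u1 v1) (Icc u2 v2) = u2 - v1 :=
      setDist_Icc' h1.le h2.le (by linarith)
    have e34 : setDist (Icc u3 v3) (Icc u4 v4) = u4 - v3 :=
      setDist_Icc' h3.le h4.le (by linarith)
    have hv1z : v1 = z := by rw [e12] at hc1; rw [hsd] at hgapt; linarith
    have hv3z : v3 = z := by rw [e34] at hc2; rw [hsd] at hgapt; linarith
    exact Set.disjoint_left.1 hD13 ⟨by linarith [h1.le], hv1z.ge⟩ ⟨by linarith [h3.le], hv3z.ge⟩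
  · -- z' < y
    have hsd : setDist (Icc y z) (Icc y' z') = y - z' := by
      rw [setDist_comm']; exact setDist_Icc' hyz'.le hyz.le hord.le
    have e12 : setDist (Icc u1 v1) (Icc u2 v2) = u1 - v2 := by
      rw [setDist_comm']; exact setDist_Icc' h2.le h1.le (by linarith)
    have e34 : setDist (Icc u3 v3) (Icc u4 v4) = u3 - v4 := by
      rw [setDist_comm']; exact setDist_Icc' h4.le h3.le (by linarith)
    have hu1y : u1 = y := by rw [e12] at hc1; rw [hsd] at hgapt; linarith
    have hu3y : u3 = y := by rw [e34] at hc2; rw [hsd] at hgapt; linarith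
    exact Set.disjoint_left.1 hD13 ⟨hu1y.le, by linarith [h1.le]⟩ ⟨hu3y.le, by linarith [h3.le]⟩

lemma approach_lemma (f : ℝ → ℝ)
    (hmaps : MapsTo f (Icc (0 : ℝ) 1) (Icc (0 : ℝ) 1))
    (x : ℝ) (hx : x ∈ Icc (0 : ℝ) 1)
    (K : ∀ t : ℕ, (Fin t → Bool) → Set ℝ)
    (homega : omegaSet f x ⊆ ⋂ t : ℕ, ⋃ a : Fin t → Bool, K t a)
    (s : ℕ) {δ : ℝ} (hδ : 0 < δ) :
    ∃ N, ∀ n ≥ N, ∃ a, ∃ p ∈ K s a, dist (f^[n] x) p ≤ δ := by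
  have horb : ∀ n, f^[n] x ∈ Icc (0 : ℝ) 1 := by
    intro n
    induction n with
    | zero => exact hx
    | succ n ih => rw [Function.iterate_succ_apply']; exact hmaps ih
  by_contra hcon
  push_neg at hcon
  set P : ℕ → Prop := fun n => ∀ a, ∀ p ∈ K s a, δ < dist (f^[n] x) p with hP
  have hPinf : {n | P n}.Infinite := by
    apply Set.infinite_of_not_bddAbove
    rintro ⟨b, hb⟩
    obtain ⟨n, hn, hnP⟩ := hcon (b + 1)
    have : n ≤ b := hb hnP
    omega
  have hmem : ∀ n, f^[Nat.nth P n] x ∈ Icc (0 : ℝ) 1 := fun n => horb _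
  obtain ⟨y, hy, φ, hφ, hlim⟩ := (isCompact_Icc (a := (0:ℝ)) (b := 1)).tendsto_subseq hmem
  have hyω : y ∈ omegaSet f x :=
    ⟨fun n => Nat.nth P (φ n), (Nat.nth_strictMono hPinf).comp hφ, hlim⟩
  have hyK : y ∈ ⋃ a, K s a := by
    have := homega hyω
    rw [Set.mem_iInter] at this
    exact this s
  obtain ⟨a, hya⟩ := Set.mem_iUnion.1 hyK
  obtain ⟨M, hM⟩ := (Metric.tendsto_atTop.1 hlim) δ hδ
  have h1 := hM M le_rfl
  have h2 : δ < dist (f^[Nat.nth P (φ M)] x) y :=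
    (Nat.nth_mem_of_infinite hPinf (φ M)) a y hya
  simp only [Function.comp] at h1
  exact absurd h1 (not_lt.2 h2.le)

end RQA

namespace RQA

lemma main_bound (f : ℝ → ℝ) (hf : Continuous f)
    (hmaps : MapsTo f (Icc (0 : ℝ) 1) (Icc (0 : ℝ) 1))
    (x : ℝ) (hx : x ∈ Icc (0 : ℝ) 1)
    (K : ∀ t : ℕ, (Fin t → Bool) → Set ℝ)
    (hK : ∀ t (a : Fin t → Bool), ∃ y z : ℝ, y < z ∧ 0 ≤ y ∧ z ≤ 1 ∧ K t a = Icc y z)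
    (hnest : ∀ (s t : ℕ) (hst : s ≤ t) (b : Fin t → Bool),
      K t b ⊆ K s (fun i => b (Fin.castLE hst i)))
    (hdisj : ∀ t (a b : Fin t → Bool), a ≠ b → Disjoint (K t a) (K t b))
    (hdyn : ∀ t (n : ℕ), f '' K t (word t n) = K t (word t (n + 1)))
    (homega : omegaSet f x ⊆ ⋂ t : ℕ, ⋃ a : Fin t → Bool, K t a)
    (t : ℕ) (ε : ℝ) (hε : 0 < ε)
    (hgap : ∀ a b : Fin t → Bool, a ≠ b → ε ≤ setDist (K t a) (K t b)) :
    upperCorrInf f x ε ≤ ((2 : ℝ) ^ t)⁻¹ := by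
  have hbdd : BddBelow (Set.range fun m => upperCorr f x (m + 1) ε) := by
    refine ⟨0, ?_⟩
    rintro _ ⟨m, rfl⟩
    exact upperCorr_nonneg f x (m + 1) ε
  rcases Nat.eq_zero_or_pos t with ht0 | htpos
  · subst ht0
    calc upperCorrInf f x ε ≤ upperCorr f x (0 + 1) ε := ciInf_le hbdd 0
    _ ≤ 1 := upperCorr_le_one f x 1 ε
    _ = ((2 : ℝ) ^ 0)⁻¹ := by norm_num
  have hKsub : ∀ s (a : Fin s → Bool), K s a ⊆ Icc (0 : ℝ) 1 := by
    intro s a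
    obtain ⟨y, z, hyz, hy0, hz1, hKeq⟩ := hK s a
    rw [hKeq]
    exact Set.Icc_subset_Icc hy0 hz1
  set q' : ℕ := 2 ^ (t + 1) with hq'def
  have hq'pos : 0 < q' := by positivity
  -- minimal gap at level t+1
  set PF : Finset ((Fin (t+1) → Bool) × (Fin (t+1) → Bool)) :=
    Finset.univ.filter (fun p => p.1 ≠ p.2) with hPFdef
  have hPFne : PF.Nonempty := by
    refine ⟨(word (t+1) 0, word (t+1) 1), Finset.mem_filter.2 ⟨Finset.mem_univ _, ?_⟩⟩
    rw [Ne, word_eq_iff, Nat.zero_mod, Nat.mod_eq_of_lt (Nat.one_lt_two_pow (by omega))]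
    exact fun h => one_ne_zero h.symm
  set g : ℝ := PF.inf' hPFne (fun p => setDist (K (t+1) p.1) (K (t+1) p.2)) with hgdef
  have hgpos : 0 < g := by
    rw [hgdef, Finset.lt_inf'_iff]
    rintro ⟨a, b⟩ hab
    have hne : a ≠ b := (Finset.mem_filter.1 hab).2
    obtain ⟨y, z, hyz, _, _, hKa⟩ := hK (t+1) a
    obtain ⟨y', z', hyz', _, _, hKb⟩ := hK (t+1) b
    have hdj := hdisj (t+1) a b hne
    rw [hKa, hKb] at hdj ⊢
    exact setDist_pos_of_disjoint hyz.le hyz'.le hdj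
  have hgle : ∀ a b : Fin (t+1) → Bool, a ≠ b → g ≤ setDist (K (t+1) a) (K (t+1) b) := by
    intro a b hne
    have hmem : (a, b) ∈ PF := by
      rw [hPFdef]
      exact Finset.mem_filter.2 ⟨Finset.mem_univ _, hne⟩
    rw [hgdef]
    exact Finset.inf'_le _ hmem
  -- gamma
  set B : Finset ℕ := (Finset.range q').filter (fun d => d % 2 ^ t ≠ 0) with hBdef
  have hBne : B.Nonempty := by
    refine ⟨1, Finset.mem_filter.2 ⟨Finset.mem_range.2 ?_, ?_⟩⟩
    · rw [hq'def]; exact Nat.one_lt_two_pow (by omega)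
    · rw [Nat.mod_eq_of_lt (Nat.one_lt_two_pow (by omega))]
      exact one_ne_zero
  set G : ℕ → ℝ := fun d => max (setDist (K (t+1) (word (t+1) 0)) (K (t+1) (word (t+1) d)))
      (setDist (K (t+1) (word (t+1) (2 ^ t))) (K (t+1) (word (t+1) (2 ^ t + d)))) with hGdef
  set γ : ℝ := B.inf' hBne (fun d => G d - ε) with hγdef
  have hγpos : 0 < γ := by
    rw [hγdef, Finset.lt_inf'_iff]
    intro d hdB
    have hdm : d % 2 ^ t ≠ 0 := by
      have := (Finset.mem_filter.1 (hBdef ▸ hdB)).2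
      exact this
    have hgl := gap_lemma K hK hnest hdisj hgap hdm
    simp only [hGdef]
    linarith
  have hγle : ∀ d ∈ B, ε + γ ≤ G d := by
    intro d hdB
    have h2 : γ ≤ G d - ε := by
      rw [hγdef]
      exact Finset.inf'_le _ hdB
    linarith
  -- tolerances
  set β : ℝ := min (γ / 3) (min (g / 3) 1) with hβdef
  have hβpos : 0 < β := by
    rw [hβdef]
    exact lt_min (by linarith) (lt_min (by linarith) one_pos)
  have hβγ : β ≤ γ / 3 := by rw [hβdef]; exact min_le_left _ _
  have hβg : β ≤ g / 3 := by rw [hβdef]; exact le_trans (min_le_right _ _) (min_le_left _ _)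
  -- uniform continuity
  have hucont : UniformContinuousOn f (Icc (-1 : ℝ) 2) :=
    isCompact_Icc.uniformContinuousOn_of_continuous hf.continuousOn
  obtain ⟨η₀, hη₀pos, hη₀⟩ := uniformContinuousOn_iff.1 hucont β hβpos
  set η : ℝ := min (η₀ / 2) β with hηdef
  have hηpos : 0 < η := lt_min (by linarith) hβpos
  have hηβ : η ≤ β := min_le_right _ _
  have hstep : ∀ u v : ℝ, u ∈ Icc (0 : ℝ) 1 → v ∈ Icc (0 : ℝ) 1 → dist u v ≤ η →
      dist (f u) (f v) ≤ β := by
    intro u v hu hv huv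
    have h1 : u ∈ Icc (-1 : ℝ) 2 := ⟨by linarith [hu.1], by linarith [hu.2]⟩
    have h2 : v ∈ Icc (-1 : ℝ) 2 := ⟨by linarith [hv.1], by linarith [hv.2]⟩
    have hlt : dist u v < η₀ := by
      have : η ≤ η₀ / 2 := min_le_left _ _
      linarith
    exact (hη₀ u h1 v h2 hlt).le
  -- orbit
  have horb : ∀ n, f^[n] x ∈ Icc (0 : ℝ) 1 := by
    intro n
    induction n with
    | zero => exact hx
    | succ n ih => rw [Function.iterate_succ_apply']; exact hmaps ih
  -- approach + tracking
  obtain ⟨N, hN⟩ := approach_lemma f hmaps x hx K homega (t+1) hηpos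
  obtain ⟨aN, pN, hpN, hdN⟩ := hN N le_rfl
  obtain ⟨c, hc⟩ := word_surj (t+1) aN
  have track : ∀ k, ∃ p ∈ K (t+1) (word (t+1) (c + k)), dist (f^[N + k] x) p ≤ η := by
    intro k
    induction k with
    | zero =>
      refine ⟨pN, ?_, ?_⟩
      · simpa [hc] using hpN
      · simpa using hdN
    | succ k ih =>
      obtain ⟨p, hp, hdp⟩ := ih
      have hfp : f p ∈ K (t+1) (word (t+1) (c + k + 1)) := by
        rw [← hdyn (t+1) (c + k)]
        exact ⟨p, hp, rfl⟩
      obtain ⟨a', p', hp', hdp'⟩ := hN (N + (k + 1)) (by omega)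
      have hd1 : dist (f^[N + (k + 1)] x) (f p) ≤ β := by
        have hit : f^[N + (k + 1)] x = f (f^[N + k] x) := Function.iterate_succ_apply' f (N + k) x
        rw [hit]
        exact hstep _ _ (horb (N + k)) (hKsub (t+1) _ hp) hdp
      by_cases hcase : a' = word (t+1) (c + (k + 1))
      · refine ⟨p', ?_, hdp'⟩
        rw [← hcase]
        exact hp'
      · exfalso
        have hge : g ≤ setDist (K (t+1) a') (K (t+1) (word (t+1) (c + k + 1))) :=
          hgle _ _ hcase
        have hle2 : setDist (K (t+1) a') (K (t+1) (word (t+1) (c + k + 1))) ≤ dist p' (f p) :=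
          setDist_le' hp' hfp
        have htri : dist p' (f p) ≤ η + β := by
          calc dist p' (f p) ≤ dist p' (f^[N + (k + 1)] x) + dist (f^[N + (k + 1)] x) (f p) :=
            dist_triangle _ _ _
          _ ≤ η + β := add_le_add (by rw [dist_comm]; exact hdp') hd1
        linarith
  have htrack' : ∀ i, N ≤ i → ∃ p ∈ K (t+1) (word (t+1) (c + (i - N))), dist (f^[i] x) p ≤ η := by
    intro i hi
    have := track (i - N)
    rwa [Nat.add_sub_cancel' hi] at this
  -- Claim C
  have claimC : ∀ p : ℕ × ℕ, N ≤ p.1 → N ≤ p.2 →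
      (∀ k < q', dist (f^[p.1 + k] x) (f^[p.2 + k] x) ≤ ε) → p.1 % 2 ^ t = p.2 % 2 ^ t := by
    rintro ⟨i, j⟩ hi hj hcl
    dsimp only at hi hj hcl ⊢
    by_contra hne
    obtain ⟨d, hdlt, hdm⟩ := exists_shift q' i j hq'pos
    have h2t : (2 : ℕ) ^ t ∣ q' := by rw [hq'def]; exact pow_dvd_pow 2 (Nat.le_succ t)
    have hdmod : d % 2 ^ t ≠ 0 := by
      intro h0
      apply hne
      have e1 : i % 2 ^ t = (i + d) % 2 ^ t := by
        simp [Nat.add_mod, h0]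
      have e2 : (i + d) % 2 ^ t = ((i + d) % q') % 2 ^ t := (Nat.mod_mod_of_dvd _ h2t).symm
      rw [e1, e2, hdm, Nat.mod_mod_of_dvd _ h2t]
    have hdB : d ∈ B := by
      rw [hBdef]
      exact Finset.mem_filter.2 ⟨Finset.mem_range.2 hdlt, hdmod⟩
    have hγd := hγle d hdB
    have hrex : ∃ r : ℕ, ε + γ ≤ setDist (K (t+1) (word (t+1) r)) (K (t+1) (word (t+1) (r + d))) := by
      rw [hGdef] at hγd
      rcases le_max_iff.1 hγd with h | h
      · exact ⟨0, by simpa using h⟩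
      · exact ⟨2 ^ t, h⟩
    obtain ⟨r, hrd⟩ := hrex
    obtain ⟨k, hklt, hk⟩ := exists_shift q' (c + (i - N)) r hq'pos
    obtain ⟨p, hp, hdp⟩ := htrack' (i + k) (by omega)
    obtain ⟨p', hp', hdp'⟩ := htrack' (j + k) (by omega)
    have w1 : word (t+1) (c + (i + k - N)) = word (t+1) r := by
      apply word_eq_iff.2
      have e : c + (i + k - N) = c + (i - N) + k := by omega
      rw [e]
      exact hk
    have w2 : word (t+1) (c + (j + k - N)) = word (t+1) (r + d) := by
      apply word_eq_iff.2
      have m1 : Nat.ModEq q' (i + d) j := hdm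
      have m2 : Nat.ModEq q' (c + (i - N) + k) r := hk
      have m5 : Nat.ModEq q' (c + (i - N) + k + (i + d)) (r + (i + d)) := m2.add_right _
      have m6 : Nat.ModEq q' (c + (i - N) + k + (i + d)) (c + (i - N) + k + j) :=
        Nat.ModEq.add_left _ m1
      have m7 : Nat.ModEq q' (c + (i - N) + k + j) (r + (i + d)) := m6.symm.trans m5
      have e1 : c + (i - N) + k + j = (c + (j + k - N)) + i := by omega
      have e2 : r + (i + d) = (r + d) + i := by omega
      rw [e1, e2] at m7
      exact Nat.ModEq.add_right_cancel' i m7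
    rw [w1] at hp
    rw [w2] at hp'
    have hsd : setDist (K (t+1) (word (t+1) r)) (K (t+1) (word (t+1) (r + d))) ≤ dist p p' :=
      setDist_le' hp hp'
    have htri : dist p p' ≤ η + ε + η := by
      calc dist p p' ≤ dist p (f^[i + k] x) + dist (f^[i + k] x) (f^[j + k] x)
          + dist (f^[j + k] x) p' := dist_triangle4 _ _ _ _
      _ ≤ η + ε + η := by
        have hmid := hcl k hklt
        have h1 : dist p (f^[i + k] x) ≤ η := by rw [dist_comm]; exact hdp
        exact add_le_add (add_le_add h1 hmid) hdp'
    linarith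
  -- counting
  have hcard : ∀ n : ℕ, corrSum f x q' n ε ≤
      ((2 * N * n + n * (n / 2 ^ t + 1) : ℕ) : ℝ) / (n : ℝ) ^ 2 := by
    intro n
    unfold corrSum
    rcases Nat.eq_zero_or_pos n with h | h
    · subst h
      have e0 : ((0 : ℕ) : ℝ) ^ 2 = 0 := by norm_num
      rw [e0, div_zero, div_zero]
    · gcongr
      exact_mod_cast card_pairs n N (2 ^ t)
          (fun p => ∀ k < q', dist (f^[p.1 + k] x) (f^[p.2 + k] x) ≤ ε) claimC
  have hbound : ∀ᶠ n in Filter.atTop, corrSum f x q' n ε ≤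
      2 * N / (n : ℝ) + ((2 : ℝ) ^ t)⁻¹ + 1 / (n : ℝ) := by
    filter_upwards [Filter.eventually_ge_atTop 1] with n hn
    have hnpos : (0 : ℝ) < n := by exact_mod_cast hn
    have hn0 : (n : ℝ) ≠ 0 := hnpos.ne'
    have h2t0 : ((2 : ℝ) ^ t) ≠ 0 := by positivity
    refine le_trans (hcard n) ?_
    have hdivle : ((n / 2 ^ t : ℕ) : ℝ) ≤ (n : ℝ) / (2 : ℝ) ^ t := by
      have := Nat.cast_div_le (m := n) (n := 2 ^ t) (α := ℝ)
      push_cast at this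
      exact this
    have hcast : ((2 * N * n + n * (n / 2 ^ t + 1) : ℕ) : ℝ)
        ≤ 2 * N * n + ((n : ℝ) * ((n : ℝ) / 2 ^ t) + n) := by
      push_cast
      have hmul : (n : ℝ) * ((n / 2 ^ t : ℕ) : ℝ) ≤ (n : ℝ) * ((n : ℝ) / 2 ^ t) :=
        mul_le_mul_of_nonneg_left hdivle hnpos.le
      push_cast at hmul
      nlinarith [hmul]
    calc _ ≤ (2 * N * n + ((n : ℝ) * ((n : ℝ) / 2 ^ t) + n)) / (n : ℝ) ^ 2 := by
          gcongr
    _ = 2 * N / (n : ℝ) + ((2 : ℝ) ^ t)⁻¹ + 1 / (n : ℝ) := by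
          field_simp
          ring
  have hlim : Filter.Tendsto (fun n : ℕ => 2 * N / (n : ℝ) + ((2 : ℝ) ^ t)⁻¹ + 1 / (n : ℝ))
      Filter.atTop (nhds (0 + ((2 : ℝ) ^ t)⁻¹ + 0)) :=
    ((tendsto_const_div_atTop_nhds_zero_nat (2 * (N : ℝ))).add tendsto_const_nhds).add
      (tendsto_const_div_atTop_nhds_zero_nat (1 : ℝ))
  have hupper : upperCorr f x q' ε ≤ ((2 : ℝ) ^ t)⁻¹ :=
    limsup_le_of_le_tendsto (fun n => corrSum_nonneg f x q' n ε) hbound (by simpa using hlim)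
  have hq1 : q' - 1 + 1 = q' := Nat.succ_pred_eq_of_pos hq'pos
  calc upperCorrInf f x ε ≤ upperCorr f x (q' - 1 + 1) ε := ciInf_le hbdd (q' - 1)
  _ = upperCorr f x q' ε := by rw [hq1]
  _ ≤ _ := hupper

end RQA

/-- for a zero-entropy interval map (the solenoidal dyadic
structure of the infinite ω-limit set, which holds for zero-entropy maps, is
given as hypothesis), `C̄_∞(x,ε) ≤ 2^{-t}` whenever `ε` is below the minimal
distance between distinct level-`t` intervals, and `limsup_{ε→0} C̄_∞(x,ε) = 0`. -/
theorem stmt_11 (f : ℝ → ℝ) (hf : Continuous f)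
    (hmaps : MapsTo f (Icc (0 : ℝ) 1) (Icc (0 : ℝ) 1))
    (x : ℝ) (hx : x ∈ Icc (0 : ℝ) 1)
    (K : ∀ t : ℕ, (Fin t → Bool) → Set ℝ)
    (hK : ∀ t (a : Fin t → Bool), ∃ y z : ℝ, y < z ∧ 0 ≤ y ∧ z ≤ 1 ∧ K t a = Icc y z)
    (hnest : ∀ (s t : ℕ) (hst : s ≤ t) (b : Fin t → Bool),
      K t b ⊆ K s (fun i => b (Fin.castLE hst i)))
    (hdisj : ∀ t (a b : Fin t → Bool), a ≠ b → Disjoint (K t a) (K t b))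
    (hdyn : ∀ t (n : ℕ), f '' K t (word t n) = K t (word t (n + 1)))
    (hinf : (omegaSet f x).Infinite)
    (homega : omegaSet f x ⊆ ⋂ t : ℕ, ⋃ a : Fin t → Bool, K t a) :
    (∀ t : ℕ, ∀ ε : ℝ, 0 < ε →
      (∀ a b : Fin t → Bool, a ≠ b → ε ≤ setDist (K t a) (K t b)) →
      upperCorrInf f x ε ≤ ((2 : ℝ) ^ t)⁻¹) ∧
    limsup (fun ε => upperCorrInf f x ε) (nhdsWithin (0 : ℝ) (Set.Ioi 0)) = 0 := by
  
  constructor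
  · intro t ε hε hgap
    exact main_bound f hf hmaps x hx K hK hnest hdisj hdyn homega t ε hε hgap
  · have hnn : ∀ ε : ℝ, 0 ≤ upperCorrInf f x ε := fun ε =>
      le_ciInf (fun m => upperCorr_nonneg f x (m + 1) ε)
    have hub : ∀ ε : ℝ, upperCorrInf f x ε ≤ 1 := by
      intro ε
      have hbdd : BddBelow (Set.range fun m => upperCorr f x (m + 1) ε) := by
        refine ⟨0, ?_⟩
        rintro _ ⟨m, rfl⟩
        exact upperCorr_nonneg f x (m + 1) ε
      exact le_trans (ciInf_le hbdd 0) (upperCorr_le_one f x 1 ε)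
    have hco : Filter.IsCoboundedUnder (· ≤ ·) (nhdsWithin (0 : ℝ) (Set.Ioi 0))
        (fun ε => upperCorrInf f x ε) :=
      isCoboundedUnder_le_of_eventually_le _ (x := 0) (Filter.Eventually.of_forall hnn)
    have key : ∀ T : ℕ, Filter.limsup (fun ε => upperCorrInf f x ε)
        (nhdsWithin (0 : ℝ) (Set.Ioi 0)) ≤ ((2 : ℝ) ^ (T + 1))⁻¹ := by
      intro T
      set PF : Finset ((Fin (T+1) → Bool) × (Fin (T+1) → Bool)) :=
        Finset.univ.filter (fun p => p.1 ≠ p.2) with hPFdef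
      have hPFne : PF.Nonempty := by
        refine ⟨(word (T+1) 0, word (T+1) 1), Finset.mem_filter.2 ⟨Finset.mem_univ _, ?_⟩⟩
        rw [Ne, word_eq_iff, Nat.zero_mod, Nat.mod_eq_of_lt (Nat.one_lt_two_pow (by omega))]
        exact fun h => one_ne_zero h.symm
      set ε₀ : ℝ := PF.inf' hPFne (fun p => setDist (K (T+1) p.1) (K (T+1) p.2)) with hε₀def
      have hε₀pos : 0 < ε₀ := by
        rw [hε₀def, Finset.lt_inf'_iff]
        rintro ⟨a, b⟩ hab
        have hne : a ≠ b := (Finset.mem_filter.1 hab).2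
        obtain ⟨y, z, hyz, _, _, hKa⟩ := hK (T+1) a
        obtain ⟨y', z', hyz', _, _, hKb⟩ := hK (T+1) b
        have hdj := hdisj (T+1) a b hne
        rw [hKa, hKb] at hdj ⊢
        exact setDist_pos_of_disjoint hyz.le hyz'.le hdj
      apply Filter.limsup_le_of_le hco
      have hIoc : Set.Ioc (0 : ℝ) ε₀ ∈ nhdsWithin (0 : ℝ) (Set.Ioi 0) :=
        Ioc_mem_nhdsGT hε₀pos
      filter_upwards [hIoc] with ε hεm
      apply main_bound f hf hmaps x hx K hK hnest hdisj hdyn homega (T+1) ε hεm.1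
      intro a b hne
      have hmem : (a, b) ∈ PF := by
        rw [hPFdef]
        exact Finset.mem_filter.2 ⟨Finset.mem_univ _, hne⟩
      calc ε ≤ ε₀ := hεm.2
      _ ≤ _ := by rw [hε₀def]; exact Finset.inf'_le _ hmem
    apply le_antisymm
    · by_contra hlt
      push_neg at hlt
      obtain ⟨T, hT⟩ := exists_pow_lt_of_lt_one hlt (by norm_num : (1 : ℝ) / 2 < 1)
      have h2 : ((2 : ℝ) ^ (T + 1))⁻¹ ≤ ((1 : ℝ) / 2) ^ T := by
        rw [one_div, inv_pow]
        apply inv_anti₀ (by positivity)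
        exact pow_le_pow_right₀ one_le_two (Nat.le_succ T)
      linarith [key T, hT, h2]
    · apply Filter.le_limsup_of_frequently_le
      · exact (Filter.Eventually.of_forall hnn).frequently
      · exact Filter.isBoundedUnder_of ⟨1, hub⟩
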